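/- Let B_n denote the Baxter numbers defined by the recurrence (n+3)(n+4)B_{n+1} = (7n^2+21n+12)B_n + 8n(n-1)B_{n-1} with B_0 = B_1 = 1. Then for all n ≥ 3, 8^n·n^{-5} < B_n < 8^n·n^{-3}. -/
import Mathlib
set_option maxHeartbeats 1000000


/-- The Baxter numbers, defined by the recurrence
`(n+3)(n+4) B_{n+1} = (7n^2+21n+12) B_n + 8n(n-1) B_{n-1}` with `B_0 = B_1 = 1`. -/
noncomputable def B : ℕ → ℝ
  | 0 => 1
  | 1 => 1
  | (m + 2) =>
      ((7 * ((m : ℝ) + 1) ^ 2 + 21 * ((m : ℝ) + 1) + 12) * B (m + 1)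
        + 8 * ((m : ℝ) + 1) * (m : ℝ) * B m) / (((m : ℝ) + 4) * ((m : ℝ) + 5))

private def P (n : ℕ) : Prop :=
  (8 : ℝ) ^ n / (n : ℝ) ^ 5 < B n ∧ B n < (8 : ℝ) ^ n / (n : ℝ) ^ 3

private lemma hB3 : B 3 = 6 := by norm_num [B]
private lemma hB4 : B 4 = 22 := by norm_num [B]
private lemma hB5 : B 5 = 92 := by norm_num [B]

private lemma hP3 : P 3 := by constructor <;> rw [hB3] <;> norm_num
private lemma hP4 : P 4 := by constructor <;> rw [hB4] <;> norm_num
private lemma hP5 : P 5 := by constructor <;> rw [hB5] <;> norm_num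

private lemma step (m : ℕ) (h4 : P (m + 4)) (h5 : P (m + 5)) : P (m + 6) := by
  obtain ⟨ha1, ha2⟩ := h4
  obtain ⟨hb1, hb2⟩ := h5
  have hx : (0:ℝ) ≤ (m:ℝ) := Nat.cast_nonneg m
  set x : ℝ := (m : ℝ) with hxdef
  have hrec : B (m+6) = ((7 * (x + 5) ^ 2 + 21 * (x + 5) + 12) * B (m + 5)
        + 8 * (x + 5) * (x + 4) * B (m + 4)) / ((x + 8) * (x + 9)) := by
    show B (m+4+2) = _
    rw [B, hxdef]
    push_cast
    ring_nf
  set a : ℝ := B (m + 4) with hadef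
  set b : ℝ := B (m + 5) with hbdef
  set t : ℝ := (8:ℝ) ^ (m + 4) with htdef
  have ht : (0:ℝ) < t := by rw [htdef]; positivity
  have hcast4 : ((m + 4 : ℕ) : ℝ) = x + 4 := by push_cast; ring
  have hcast5 : ((m + 5 : ℕ) : ℝ) = x + 5 := by push_cast; ring
  have hcast6 : ((m + 6 : ℕ) : ℝ) = x + 6 := by push_cast; ring
  have h8a : (8:ℝ) ^ (m + 5) = 8 * t := by rw [htdef, pow_succ]; ring
  have h8b : (8:ℝ) ^ (m + 6) = 64 * t := by
    rw [htdef, show m + 6 = (m+4) + 1 + 1 from rfl, pow_succ, pow_succ]; ring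
  rw [hcast4] at ha1 ha2
  rw [hcast5, h8a] at hb1 hb2
  have p4 : (0:ℝ) < x + 4 := by linarith
  have p5 : (0:ℝ) < x + 5 := by linarith
  have p6 : (0:ℝ) < x + 6 := by linarith
  have pD : (0:ℝ) < (x + 8) * (x + 9) := by nlinarith
  have ha2' : a * (x + 4) ^ 3 < t := by
    rw [lt_div_iff₀ (by positivity)] at ha2; linarith
  have ha1' : t < a * (x + 4) ^ 5 := by
    rw [div_lt_iff₀ (by positivity)] at ha1; linarith
  have hb2' : b * (x + 5) ^ 3 < 8 * t := by
    rw [lt_div_iff₀ (by positivity)] at hb2; linarith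
  have hb1' : 8 * t < b * (x + 5) ^ 5 := by
    rw [div_lt_iff₀ (by positivity)] at hb1; linarith
  have txk : ∀ k : ℕ, (0:ℝ) ≤ t * x ^ k := fun k => by positivity
  constructor
  · -- lower bound
    rw [hcast6, h8b, hrec, div_lt_div_iff₀ (by positivity) pD]
    have k1 : (7 * (x + 5) ^ 2 + 21 * (x + 5) + 12) * (x+6)^5 * (x+4)^4 * (8 * t)
        < (7 * (x + 5) ^ 2 + 21 * (x + 5) + 12) * (x+6)^5 * (x+4)^4 * (b * (x+5)^5) :=
      mul_lt_mul_of_pos_left hb1' (by positivity)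
    have k2 : 8 * (x+5)^6 * (x+6)^5 * t < 8 * (x+5)^6 * (x+6)^5 * (a * (x+4)^5) :=
      mul_lt_mul_of_pos_left ha1' (by positivity)
    have key : (64 * t * ((x + 8) * (x + 9))) * ((x+4)^4 * (x+5)^5)
        < (((7 * (x + 5) ^ 2 + 21 * (x + 5) + 12) * b
            + 8 * (x + 5) * (x + 4) * a) * (x + 6) ^ 5) * ((x+4)^4 * (x+5)^5) := by
      linarith [k1, k2, txk 0, txk 1, txk 2, txk 3, txk 4, txk 5, txk 6, txk 7,
        txk 8, txk 9, txk 10, txk 11]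
    exact lt_of_mul_lt_mul_right key (by positivity)
  · -- upper bound
    rw [hcast6, h8b, hrec, div_lt_div_iff₀ pD (by positivity)]
    have k1 : (7 * (x + 5) ^ 2 + 21 * (x + 5) + 12) * (x+6)^3 * (x+4)^2 * (b * (x+5)^3)
        < (7 * (x + 5) ^ 2 + 21 * (x + 5) + 12) * (x+6)^3 * (x+4)^2 * (8 * t) :=
      mul_lt_mul_of_pos_left hb2' (by positivity)
    have k2 : 8 * (x+5)^4 * (x+6)^3 * (a * (x+4)^3) < 8 * (x+5)^4 * (x+6)^3 * t :=
      mul_lt_mul_of_pos_left ha2' (by positivity)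
    have key : ((((7 * (x + 5) ^ 2 + 21 * (x + 5) + 12) * b
            + 8 * (x + 5) * (x + 4) * a)) * (x + 6) ^ 3) * ((x+4)^2 * (x+5)^3)
        < (64 * t * ((x + 8) * (x + 9))) * ((x+4)^2 * (x+5)^3) := by
      linarith [k1, k2, txk 0, txk 1, txk 2, txk 3, txk 4, txk 5, txk 6, txk 7]
    exact lt_of_mul_lt_mul_right key (by positivity)

private lemma aux : ∀ m : ℕ, P (m + 4) ∧ P (m + 5) := by
  intro m
  induction m with
  | zero => exact ⟨hP4, hP5⟩
  | succ k ih => exact ⟨ih.2, step k ih.1 ih.2⟩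

theorem stmt_8 : ∀ n : ℕ, 3 ≤ n →
    (8 : ℝ) ^ n / (n : ℝ) ^ 5 < B n ∧ B n < (8 : ℝ) ^ n / (n : ℝ) ^ 3 := by
  intro n hn
  obtain ⟨k, rfl⟩ := Nat.exists_eq_add_of_le hn
  match k with
  | 0 => exact hP3
  | (j + 1) =>
    rw [show 3 + (j + 1) = j + 4 from by omega]
    exact (aux j).1
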